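/- Let H be a time-independent Hamiltonian on a bipartite system H_S ⊗ H_M and let {Π_m} be the rank-one projectors onto an orthonormal basis of H_M. Then H commutes with each 1⊗Π_m (equivalently H = Σ_m h_m ⊗ Π_m is block diagonal) if and only if for every state ρ_0 that is block diagonal in this basis (i.e. ρ_0 = Σ_m ρ_m ⊗ Π_m), the evolved state e^{-itH} ρ_0 e^{itH} is block diagonal in this basis for all times t. -/

import Mathlib

open Matrix
open scoped Kronecker ComplexOrder

namespace Stmt1

variable {s μ : Type*} [Fintype s] [DecidableEq s] [Fintype μ] [DecidableEq μ]

/-- A density matrix: positive semidefinite with unit trace. -/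
def IsDensity (ρ : Matrix (s × μ) (s × μ) ℂ) : Prop :=
  ρ.PosSemidef ∧ ρ.trace = 1

/-- A state on `H_S ⊗ H_M` is classical (block diagonal) w.r.t. the rank-one projectors
`P m` on the mediator if it has the form `Σ_m ρ_m ⊗ P m`. -/
def IsClassical (P : μ → Matrix μ μ ℂ) (ρ : Matrix (s × μ) (s × μ) ℂ) : Prop :=
  ∃ r : μ → Matrix s s ℂ, ρ = ∑ m, r m ⊗ₖ P m

section Aux

set_option linter.unusedSectionVars false

variable (v : μ → μ → ℂ) (P : μ → Matrix μ μ ℂ)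

lemma hasDerivAt_comp_ofReal' {E : Type*} [NormedAddCommGroup E] [NormedSpace ℂ E]
    {e : ℂ → E} {e' : E} {z : ℝ} (hf : HasDerivAt e e' ↑z) :
    HasDerivAt (fun y : ℝ => e ↑y) e' z := by
  have := hf.scomp z Complex.ofRealCLM.hasDerivAt
  simp at this
  exact this

lemma sum_ite_const {α : Type*} [Fintype α] (c : Prop) [Decidable c] (f : α → ℂ) :
    (∑ x : α, if c then f x else 0) = if c then ∑ x, f x else 0 := by
  split_ifs <;> simp

/-- Sums pull out of the left factor of a Kronecker product. -/
lemma sum_kronecker {ι : Type*} (f : Finset ι) (A : ι → Matrix s s ℂ) (B : Matrix μ μ ℂ) :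
    ∑ i ∈ f, A i ⊗ₖ B = (∑ i ∈ f, A i) ⊗ₖ B := by
  ext ⟨a, i⟩ ⟨b, j⟩
  simp [Matrix.kroneckerMap_apply, Matrix.sum_apply, Finset.sum_mul]

lemma kronecker_sum {ι : Type*} (f : Finset ι) (A : Matrix s s ℂ) (B : ι → Matrix μ μ ℂ) :
    ∑ i ∈ f, A ⊗ₖ B i = A ⊗ₖ (∑ i ∈ f, B i) := by
  ext ⟨a, i⟩ ⟨b, j⟩
  simp [Matrix.kroneckerMap_apply, Matrix.sum_apply, Finset.mul_sum]

variable (honb : ∀ m m', ∑ i, (starRingEnd ℂ) (v m i) * v m' i = if m = m' then 1 else 0)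
variable (hP : ∀ m, P m = Matrix.vecMulVec (v m) (star (v m)))

include honb hP in
lemma P_mul_P (m m' : μ) : P m * P m' = if m = m' then P m else 0 := by
  rw [hP, hP]
  ext i j
  have key : ∑ k, (v m i * (starRingEnd ℂ) (v m k)) * (v m' k * (starRingEnd ℂ) (v m' j))
      = (v m i * (starRingEnd ℂ) (v m' j)) * ∑ k, (starRingEnd ℂ) (v m k) * v m' k := by
    rw [Finset.mul_sum]
    exact Finset.sum_congr rfl fun k _ => by ring
  simp only [Matrix.mul_apply, Matrix.vecMulVec_apply, Pi.star_apply, RCLike.star_def]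
  rw [key, honb]
  by_cases h : m = m'
  · subst h
    simp [hP, Matrix.vecMulVec_apply]
  · simp [h]

include honb hP in
lemma P_sum : ∑ m, P m = (1 : Matrix μ μ ℂ) := by
  classical
  set B : Matrix μ μ ℂ := Matrix.of v with hB
  have h1 : B * Bᴴ = 1 := by
    ext m m'
    have key : ∑ i, v m i * (starRingEnd ℂ) (v m' i) = ∑ i, (starRingEnd ℂ) (v m' i) * v m i :=
      Finset.sum_congr rfl fun i _ => by ring
    simp only [Matrix.mul_apply, Matrix.conjTranspose_apply, hB, Matrix.of_apply,
      RCLike.star_def, Matrix.one_apply]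
    rw [key, honb]
    by_cases h : m' = m
    · subst h; simp
    · rw [if_neg h, if_neg (fun hh => h hh.symm)]
  have h2 : Bᴴ * B = 1 := mul_eq_one_comm.mp h1
  ext i j
  have h4 : ∑ m, (starRingEnd ℂ) (v m i) * v m j = if i = j then 1 else 0 := by
    have h5 := congrFun (congrFun h2 i) j
    simpa [Matrix.mul_apply, Matrix.conjTranspose_apply, hB, Matrix.one_apply] using h5
  have h5 := congrArg (starRingEnd ℂ) h4
  simp only [map_sum, _root_.map_mul, Complex.conj_conj, apply_ite (starRingEnd ℂ),
    _root_.map_one, _root_.map_zero] at h5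
  simp only [Matrix.sum_apply, hP, Matrix.vecMulVec_apply, Pi.star_apply, RCLike.star_def,
    Matrix.one_apply]
  exact h5

variable (Q : μ → Matrix (s × μ) (s × μ) ℂ)
variable (hQ : ∀ m, Q m = (1 : Matrix s s ℂ) ⊗ₖ P m)

include honb hP hQ in
lemma Q_mul_Q (m m' : μ) : Q m * Q m' = if m = m' then Q m else 0 := by
  rw [hQ, hQ, ← Matrix.mul_kronecker_mul, one_mul, P_mul_P v P honb hP]
  by_cases h : m = m'
  · rw [if_pos h, if_pos h]
  · rw [if_neg h, if_neg h, Matrix.kronecker_zero]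

include honb hP hQ in
lemma Q_sum : ∑ m, Q m = (1 : Matrix (s × μ) (s × μ) ℂ) := by
  simp_rw [hQ]
  rw [kronecker_sum, P_sum v P honb hP, Matrix.one_kronecker_one]

include honb hP hQ in
lemma classical_iff (ρ : Matrix (s × μ) (s × μ) ℂ) :
    IsClassical P ρ ↔ ∀ m, Q m * ρ = ρ * Q m := by
  constructor
  · rintro ⟨r, rfl⟩ m
    rw [Finset.mul_sum, Finset.sum_mul]
    refine Finset.sum_congr rfl fun m' _ => ?_
    rw [hQ, ← Matrix.mul_kronecker_mul, ← Matrix.mul_kronecker_mul, one_mul, mul_one,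
      P_mul_P v P honb hP m m', P_mul_P v P honb hP m' m]
    by_cases h : m = m'
    · rw [if_pos h, if_pos h.symm, h]
    · rw [if_neg h, if_neg (Ne.symm h)]
  · intro hc
    refine ⟨fun m => Matrix.of fun a b => ∑ k, ∑ l,
      (starRingEnd ℂ) (v m k) * ρ (a, k) (b, l) * v m l, ?_⟩
    have key : ∀ m, Q m * ρ * Q m =
        (Matrix.of fun a b => ∑ k, ∑ l,
          (starRingEnd ℂ) (v m k) * ρ (a, k) (b, l) * v m l) ⊗ₖ P m := by
      intro m
      ext ⟨a, i⟩ ⟨b, j⟩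
      rw [hQ, hP]
      simp only [Matrix.mul_apply, Matrix.kroneckerMap_apply, Matrix.vecMulVec_apply,
        Pi.star_apply, RCLike.star_def, Matrix.one_apply, Fintype.sum_prod_type,
        Matrix.of_apply, ite_mul, one_mul, zero_mul, mul_ite, mul_zero, mul_one]
      simp_rw [sum_ite_const]
      simp only [Finset.sum_ite_eq, Finset.sum_ite_eq', Finset.mem_univ, if_true]
      simp only [Finset.sum_mul]
      rw [Finset.sum_comm]
      refine Finset.sum_congr rfl fun k _ => Finset.sum_congr rfl fun l _ => ?_
      ring
    have hρ : ρ = ∑ m, Q m * ρ * Q m := by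
      have e : ∀ m, Q m * ρ * Q m = Q m * ρ := by
        intro m
        rw [mul_assoc, ← hc m, ← mul_assoc, Q_mul_Q v P honb hP Q hQ]
        simp
      simp_rw [e, ← Finset.sum_mul, Q_sum v P honb hP Q hQ, one_mul]
    conv_lhs => rw [hρ]
    exact Finset.sum_congr rfl fun m _ => key m

include honb in
lemma trace_P (m : μ) (hPm : P m = Matrix.vecMulVec (v m) (star (v m))) :
    (P m).trace = 1 := by
  rw [hPm]
  have := honb m m
  rw [if_pos rfl] at this
  rw [Matrix.trace]
  simp only [Matrix.diag_apply, Matrix.vecMulVec_apply, Pi.star_apply, RCLike.star_def]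
  rw [← this]
  exact Finset.sum_congr rfl fun i _ => by ring

lemma sum_stdBasis : ∑ a : s, Matrix.single a a (1 : ℂ) = 1 := by
  ext b c
  simp only [Matrix.sum_apply, Matrix.single, Matrix.of_apply, Matrix.one_apply]
  by_cases h : b = c
  · subst h
    rw [Finset.sum_eq_single b] <;> simp +contextual
  · rw [if_neg h, Finset.sum_eq_zero]
    intro a _
    rw [if_neg]
    rintro ⟨rfl, rfl⟩
    exact h rfl

end Aux

theorem classical_interaction_iff_preserves_classical
    (v : μ → μ → ℂ)
    (honb : ∀ m m', ∑ i, (starRingEnd ℂ) (v m i) * v m' i = if m = m' then 1 else 0)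
    (P : μ → Matrix μ μ ℂ)
    (hP : ∀ m, P m = Matrix.vecMulVec (v m) (star (v m)))
    (H : Matrix (s × μ) (s × μ) ℂ) (hH : H.IsHermitian) :
    (∀ m, H * ((1 : Matrix s s ℂ) ⊗ₖ P m) = ((1 : Matrix s s ℂ) ⊗ₖ P m) * H) ↔
      (∀ ρ₀ : Matrix (s × μ) (s × μ) ℂ, IsDensity ρ₀ → IsClassical P ρ₀ → ∀ t : ℝ,
        IsClassical P
          (NormedSpace.exp ((-(Complex.I * t)) • H) * ρ₀ *
            NormedSpace.exp ((Complex.I * t) • H))) := by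
  set Q : μ → Matrix (s × μ) (s × μ) ℂ := fun m => (1 : Matrix s s ℂ) ⊗ₖ P m with hQdef
  have hQ : ∀ m, Q m = (1 : Matrix s s ℂ) ⊗ₖ P m := fun _ => rfl
  constructor
  · -- forward direction
    intro hcomm ρ₀ _ hclass t
    rw [classical_iff v P honb hP Q hQ] at hclass ⊢
    intro m
    have hHQm : Commute H (Q m) := hcomm m
    have hU : Commute (NormedSpace.exp ((-(Complex.I * t)) • H)) (Q m) :=
      Commute.exp_left (hHQm.smul_left _)
    have hU' : Commute (NormedSpace.exp ((Complex.I * t) • H)) (Q m) :=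
      Commute.exp_left (hHQm.smul_left _)
    exact ((hU.symm.mul_right (hclass m)).mul_right hU'.symm).eq
  · -- backward direction
    intro hpres
    have hQQ := Q_mul_Q v P honb hP Q hQ
    have hQsum := Q_sum v P honb hP Q hQ
    -- instances for calculus on matrices
    letI : SeminormedRing (Matrix (s × μ) (s × μ) ℂ) := Matrix.linftyOpSemiNormedRing
    letI : NormedRing (Matrix (s × μ) (s × μ) ℂ) := Matrix.linftyOpNormedRing
    letI : NormedAlgebra ℂ (Matrix (s × μ) (s × μ) ℂ) := Matrix.linftyOpNormedAlgebra
    letI : NormedAlgebra ℝ (Matrix (s × μ) (s × μ) ℂ) := Matrix.linftyOpNormedAlgebra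
    set A : Matrix (s × μ) (s × μ) ℂ := (-Complex.I) • H with hA
    set B : Matrix (s × μ) (s × μ) ℂ := Complex.I • H with hB
    -- the key relation obtained from differentiating the evolution at t = 0
    have hstep : ∀ (m m₀ : μ) (a : s),
        Q m * (H * (Matrix.single a a 1 ⊗ₖ P m₀)
            - (Matrix.single a a 1 ⊗ₖ P m₀) * H)
          = (H * (Matrix.single a a 1 ⊗ₖ P m₀)
            - (Matrix.single a a 1 ⊗ₖ P m₀) * H) * Q m := by
      intro m m₀ a
      set ρ₀ : Matrix (s × μ) (s × μ) ℂ := Matrix.single a a 1 ⊗ₖ P m₀ with hρ₀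
      have hden : IsDensity ρ₀ := by
        constructor
        · set w : s × μ → ℂ := fun p => (if p.1 = a then 1 else 0) * v m₀ p.2 with hw
          have hvec : ρ₀ = Matrix.vecMulVec w (star w) := by
            ext ⟨b, i⟩ ⟨c, j⟩
            simp only [hρ₀, Matrix.kroneckerMap_apply, hP, Matrix.vecMulVec_apply,
              Pi.star_apply, RCLike.star_def, Matrix.single, Matrix.of_apply, hw,
              _root_.map_mul, apply_ite (starRingEnd ℂ), _root_.map_one, _root_.map_zero]
            by_cases hb : a = b
            · by_cases hc : a = c
              · subst hb; subst hc; simp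
              · subst hb; simp [hc, Ne.symm hc]
            · by_cases hc : a = c
              · subst hc; simp [hb, Ne.symm hb]
              · simp [hb, hc, Ne.symm hb, Ne.symm hc]
          rw [hvec, Matrix.vecMulVec_eq Unit, ← Matrix.conjTranspose_replicateCol]
          exact Matrix.posSemidef_self_mul_conjTranspose _
        · rw [hρ₀, Matrix.trace_kronecker, Matrix.trace_single_eq_same,
            trace_P v P honb m₀ (hP m₀), one_mul]
      have hclass : IsClassical P ρ₀ := by
        refine ⟨fun m' => if m' = m₀ then Matrix.single a a 1 else 0, ?_⟩
        rw [Finset.sum_eq_single m₀]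
        · simp [hρ₀]
        · intro b _ hne
          simp [hne]
        · intro h; exact absurd (Finset.mem_univ m₀) h
      have hcommt : ∀ t : ℝ,
          Q m * (NormedSpace.exp ((-(Complex.I * t)) • H) * ρ₀ *
              NormedSpace.exp ((Complex.I * t) • H))
            = (NormedSpace.exp ((-(Complex.I * t)) • H) * ρ₀ *
              NormedSpace.exp ((Complex.I * t) • H)) * Q m := fun t =>
        (classical_iff v P honb hP Q hQ _).1 (hpres ρ₀ hden hclass t) m
      -- derivatives
      have hfun1 : (fun t : ℝ => NormedSpace.exp ((-(Complex.I * (t : ℂ))) • H))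
          = fun t : ℝ => NormedSpace.exp ((t : ℂ) • A) := by
        funext t
        rw [hA, smul_smul]
        congr 1
        ring
      have hfun2 : (fun t : ℝ => NormedSpace.exp ((Complex.I * (t : ℂ)) • H))
          = fun t : ℝ => NormedSpace.exp ((t : ℂ) • B) := by
        funext t
        rw [hB, smul_smul]
        congr 1
        ring
      have key1 : HasDerivAt (fun z : ℂ => NormedSpace.exp (z • A)) A ((0 : ℝ) : ℂ) := by
        have := hasDerivAt_exp_smul_const (𝕂 := ℂ) A ((0 : ℝ) : ℂ)
        simp at this
        exact this
      have key2 : HasDerivAt (fun z : ℂ => NormedSpace.exp (z • B)) B ((0 : ℝ) : ℂ) := by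
        have := hasDerivAt_exp_smul_const (𝕂 := ℂ) B ((0 : ℝ) : ℂ)
        simp at this
        exact this
      have dU : HasDerivAt (fun t : ℝ => NormedSpace.exp ((-(Complex.I * (t : ℂ))) • H))
          A 0 := by
        rw [hfun1]; exact hasDerivAt_comp_ofReal' key1
      have dU' : HasDerivAt (fun t : ℝ => NormedSpace.exp ((Complex.I * (t : ℂ)) • H))
          B 0 := by
        rw [hfun2]; exact hasDerivAt_comp_ofReal' key2
      have dρ : HasDerivAt (fun t : ℝ =>
          NormedSpace.exp ((-(Complex.I * (t : ℂ))) • H) * ρ₀ *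
            NormedSpace.exp ((Complex.I * (t : ℂ)) • H)) (A * ρ₀ + ρ₀ * B) 0 := by
        have h := (dU.mul_const ρ₀).mul dU'
        have e1 : NormedSpace.exp ((-(Complex.I * ((0 : ℝ) : ℂ))) • H) = 1 := by
          simp [NormedSpace.exp_zero]
        have e2 : NormedSpace.exp ((Complex.I * ((0 : ℝ) : ℂ)) • H) = 1 := by
          simp [NormedSpace.exp_zero]
        rw [e1, e2] at h
        simp only [one_mul, mul_one] at h
        exact h
      have dF : HasDerivAt (fun t : ℝ =>
          Q m * (NormedSpace.exp ((-(Complex.I * (t : ℂ))) • H) * ρ₀ *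
            NormedSpace.exp ((Complex.I * (t : ℂ)) • H))
          - (NormedSpace.exp ((-(Complex.I * (t : ℂ))) • H) * ρ₀ *
            NormedSpace.exp ((Complex.I * (t : ℂ)) • H)) * Q m)
          (Q m * (A * ρ₀ + ρ₀ * B) - (A * ρ₀ + ρ₀ * B) * Q m) 0 :=
        (dρ.const_mul (Q m)).sub (dρ.mul_const (Q m))
      have hF0 : (fun t : ℝ =>
          Q m * (NormedSpace.exp ((-(Complex.I * (t : ℂ))) • H) * ρ₀ *
            NormedSpace.exp ((Complex.I * (t : ℂ)) • H))
          - (NormedSpace.exp ((-(Complex.I * (t : ℂ))) • H) * ρ₀ *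
            NormedSpace.exp ((Complex.I * (t : ℂ)) • H)) * Q m)
          = fun _ => (0 : Matrix (s × μ) (s × μ) ℂ) :=
        funext fun t => sub_eq_zero.mpr (hcommt t)
      have dF0 : HasDerivAt (fun t : ℝ =>
          Q m * (NormedSpace.exp ((-(Complex.I * (t : ℂ))) • H) * ρ₀ *
            NormedSpace.exp ((Complex.I * (t : ℂ)) • H))
          - (NormedSpace.exp ((-(Complex.I * (t : ℂ))) • H) * ρ₀ *
            NormedSpace.exp ((Complex.I * (t : ℂ)) • H)) * Q m)
          (0 : Matrix (s × μ) (s × μ) ℂ) 0 := by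
        rw [hF0]; exact hasDerivAt_const _ _
      have hzero : Q m * (A * ρ₀ + ρ₀ * B) - (A * ρ₀ + ρ₀ * B) * Q m = 0 :=
        dF.unique dF0
      have hAB : A * ρ₀ + ρ₀ * B = (-Complex.I) • (H * ρ₀ - ρ₀ * H) := by
        rw [hA, hB, smul_mul_assoc, mul_smul_comm]
        module
      rw [hAB, mul_smul_comm, smul_mul_assoc, ← smul_sub, smul_eq_zero] at hzero
      rcases hzero with h | h
      · exact absurd (neg_eq_zero.mp h) Complex.I_ne_zero
      · exact sub_eq_zero.mp h
    have hkey : ∀ m m₀ : μ,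
        Q m * (H * Q m₀ - Q m₀ * H) = (H * Q m₀ - Q m₀ * H) * Q m := by
      intro m m₀
      have hsum : ∑ a : s, (Matrix.single a a (1 : ℂ)) ⊗ₖ P m₀ = Q m₀ := by
        rw [sum_kronecker, sum_stdBasis, hQ]
      have h := Finset.sum_congr rfl (fun a (_ : a ∈ Finset.univ) => hstep m m₀ a)
      simp only [Finset.sum_sub_distrib, ← Finset.mul_sum, ← Finset.sum_mul] at h
      rw [hsum] at h
      exact h
    have hoff : ∀ m m₀ : μ, m ≠ m₀ → Q m * H * Q m₀ = 0 := by
      intro m m₀ hne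
      have e1 : Q m * Q m = Q m := by rw [hQQ m m, if_pos rfl]
      have e2 : Q m * Q m₀ = 0 := by rw [hQQ m m₀, if_neg hne]
      have e3 : Q m₀ * Q m = 0 := by rw [hQQ m₀ m, if_neg (Ne.symm hne)]
      have h := hkey m m₀
      simp only [mul_sub, sub_mul, ← mul_assoc] at h
      rw [e2, zero_mul, sub_zero, mul_assoc H (Q m₀) (Q m), e3, mul_zero, zero_sub] at h
      have h2 := congrArg (fun X => Q m * X) h
      simp only [← mul_assoc, mul_neg, e1, e2, zero_mul, neg_zero] at h2
      exact h2
    intro m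
    have hHQ : H * Q m = Q m * H * Q m := by
      conv_lhs => rw [← one_mul H, ← hQsum, Finset.sum_mul, Finset.sum_mul]
      rw [Finset.sum_eq_single m]
      · intro m' _ hne
        exact hoff m' m hne
      · intro h; exact absurd (Finset.mem_univ m) h
    have hQH : Q m * H = Q m * H * Q m := by
      conv_lhs => rw [← mul_one (Q m * H), ← hQsum, Finset.mul_sum]
      rw [Finset.sum_eq_single m]
      · intro m' _ hne
        exact hoff m m' (Ne.symm hne)
      · intro h; exact absurd (Finset.mem_univ m) h
    rw [hHQ]
    exact hQH.symm

end Stmt1
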